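/- Let K₁, K₂ be convex bodies in ℝⁿ, let T ⊂ ℝ × ℝⁿ × ℝⁿ be the convex hull of {(0, 0, y) : y ∈ K₂} ∪ {(1, x, −x) : x ∈ K₁}, and fix θ₀ ∈ [0,1]. Then the intersection of T with the affine subspace E = {(θ₀, x, 0) : x ∈ ℝⁿ} equals {(θ₀, x, 0) : x ∈ θ₀K₁ ∩ (1−θ₀)K₂}. -/

import Mathlib

open MeasureTheory Set Pointwise

theorem godbersen_stmt6 (n : ℕ)
    (K₁ K₂ : Set (EuclideanSpace ℝ (Fin n)))
    (hK₁_compact : IsCompact K₁) (hK₁_conv : Convex ℝ K₁)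
    (hK₁_int : (interior K₁).Nonempty)
    (hK₂_compact : IsCompact K₂) (hK₂_conv : Convex ℝ K₂)
    (hK₂_int : (interior K₂).Nonempty)
    (T : Set (ℝ × EuclideanSpace ℝ (Fin n) × EuclideanSpace ℝ (Fin n)))
    (hT : T = convexHull ℝ
      ((fun y => ((0:ℝ), (0 : EuclideanSpace ℝ (Fin n)), y)) '' K₂ ∪
       (fun x => ((1:ℝ), x, -x)) '' K₁))
    (θ₀ : ℝ) (hθ₀ : θ₀ ∈ Set.Icc (0:ℝ) 1) :
    T ∩ {p : ℝ × EuclideanSpace ℝ (Fin n) × EuclideanSpace ℝ (Fin n) |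
            p.1 = θ₀ ∧ p.2.2 = 0}
      = (fun x => (θ₀, x, (0 : EuclideanSpace ℝ (Fin n)))) ''
          (θ₀ • K₁ ∩ (1 - θ₀) • K₂) := by
  have hA : Convex ℝ ((fun y => ((0:ℝ), (0 : EuclideanSpace ℝ (Fin n)), y)) '' K₂) := by
    rintro _ ⟨y₁, hy₁, rfl⟩ _ ⟨y₂, hy₂, rfl⟩ a b ha hb hab
    refine ⟨a • y₁ + b • y₂, hK₂_conv hy₁ hy₂ ha hb hab, ?_⟩
    simp [Prod.ext_iff, Prod.smul_mk, Prod.mk_add_mk, smul_zero]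
  have hB : Convex ℝ ((fun x => ((1:ℝ), x, -x)) '' K₁) := by
    rintro _ ⟨x₁, hx₁, rfl⟩ _ ⟨x₂, hx₂, rfl⟩ a b ha hb hab
    refine ⟨a • x₁ + b • x₂, hK₁_conv hx₁ hx₂ ha hb hab, ?_⟩
    simp only [Prod.ext_iff, Prod.smul_mk, Prod.mk_add_mk, smul_neg, smul_eq_mul, mul_one]
    exact ⟨hab.symm, trivial, by abel⟩
  subst hT
  rw [convexHull_union ((hK₂_int.mono interior_subset).image _)
      ((hK₁_int.mono interior_subset).image _), hA.convexHull_eq, hB.convexHull_eq]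
  ext p
  simp only [mem_inter_iff, mem_convexJoin, mem_setOf_eq, mem_image]
  constructor
  · rintro ⟨⟨_, ⟨y, hy, rfl⟩, _, ⟨x₁, hx₁, rfl⟩, hseg⟩, hp1, hp2⟩
    obtain ⟨a, b, ha, hb, hab, heq⟩ := hseg
    subst heq
    have h1 : b = θ₀ := by
      simpa [smul_eq_mul] using hp1
    subst h1
    have ha' : a = 1 - b := by linarith
    subst ha'
    have h2 : (1 - b) • y - b • x₁ = 0 := by
      simpa [sub_eq_add_neg, smul_neg] using hp2
    have h3 : (1 - b) • y = b • x₁ := by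
      rwa [sub_eq_zero] at h2
    refine ⟨b • x₁, ⟨smul_mem_smul_set hx₁, ?_⟩, ?_⟩
    · rw [← h3]; exact smul_mem_smul_set hy
    · simp only [Prod.ext_iff, Prod.smul_mk, Prod.mk_add_mk, smul_eq_mul, smul_neg,
        mul_zero, mul_one, smul_zero, zero_add]
      refine ⟨by trivial, trivial, ?_⟩
      rw [eq_comm, h3]; simp
  · rintro ⟨x, ⟨hx1, hx2⟩, rfl⟩
    obtain ⟨x₁, hx₁, hx₁e⟩ := hx1
    obtain ⟨y, hy, hye⟩ := hx2
    refine ⟨⟨_, ⟨y, hy, rfl⟩, _, ⟨x₁, hx₁, rfl⟩,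
      ⟨1 - θ₀, θ₀, by linarith [hθ₀.2], hθ₀.1, by ring, ?_⟩⟩, rfl, rfl⟩
    have hx₁e' : θ₀ • x₁ = x := hx₁e
    have hye' : (1 - θ₀) • y = x := hye
    have h0 : (1 - θ₀) • y - θ₀ • x₁ = 0 := by rw [hye', hx₁e', sub_self]
    simp only [Prod.smul_mk, Prod.mk_add_mk, smul_zero, smul_neg, smul_eq_mul, mul_zero,
      mul_one, Prod.ext_iff]
    refine ⟨by ring, ?_, ?_⟩
    · rw [zero_add, hx₁e']
    · rw [eq_comm, ← sub_eq_add_neg, h0]
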